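/- Every quasi-injective virtually semisimple module is semisimple. -/

import Mathlib

/-- A module is virtually semisimple if every submodule is isomorphic to a direct summand. -/
def VirtuallySemisimple (R : Type*) [Ring R] (M : Type*) [AddCommGroup M] [Module R M] : Prop :=
  ∀ N : Submodule R M, ∃ N' : Submodule R M, (∃ C : Submodule R M, IsCompl N' C) ∧
    Nonempty (N ≃ₗ[R] N')

/-- Every quasi-injective virtually semisimple module is semisimple. -/
theorem stmt0 (R : Type*) [Ring R] (M : Type*) [AddCommGroup M] [Module R M]
    (hqi : ∀ (N : Submodule R M) (f : N →ₗ[R] M), ∃ g : M →ₗ[R] M, ∀ x : N, g x = f x)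
    (hvs : VirtuallySemisimple R M) : IsSemisimpleModule R M := by
  refine (isSemisimpleModule_iff R M).mpr ⟨fun N => ?_⟩
  obtain ⟨N', ⟨C, hc⟩, ⟨φ⟩⟩ := hvs N
  obtain ⟨g, hg⟩ := hqi N (N'.subtype ∘ₗ (φ : N →ₗ[R] N'))
  set h : M →ₗ[R] M :=
    N.subtype ∘ₗ (φ.symm : N' →ₗ[R] N) ∘ₗ (N'.projectionOnto C hc) ∘ₗ g with hdef
  have hN : ∀ x : M, (hx : x ∈ N) → h x = x := by
    intro x hx
    have h1 : g x = (φ ⟨x, hx⟩ : M) := hg ⟨x, hx⟩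
    simp only [hdef, LinearMap.comp_apply, h1]
    rw [Submodule.projectionOnto_apply_left hc (φ ⟨x, hx⟩)]
    simp
  have hrange : ∀ x : M, h x ∈ N := fun x => (φ.symm _).2
  refine ⟨LinearMap.ker h, ?_, ?_⟩
  · rw [Submodule.disjoint_def]
    intro x hxN hxk
    have := hN x hxN
    rw [LinearMap.mem_ker] at hxk
    rw [hxk] at this
    exact this.symm
  · rw [codisjoint_iff_le_sup]
    intro x _
    have hxk : x - h x ∈ LinearMap.ker h := by
      rw [LinearMap.mem_ker, map_sub, hN (h x) (hrange x), sub_self]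
    have : x = h x + (x - h x) := by abel
    rw [this]
    exact Submodule.add_mem_sup (hrange x) hxk
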